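/- Let ψ: B → ℝ be continuous, m ∈ A, and suppose the c-subgradient ∂^c ψ^c(m) = {n} is a singleton. Then for any continuous v: B → ℝ, the function t ↦ (ψ + t v)^c(m) is differentiable at t = 0 with derivative −v(n). -/

import Mathlib

/-- If `ψ : B → ℝ` is continuous and c-convex, `m ∈ A`, and the c-subgradient
`∂^c ψ^c(m) = {n}` is a singleton, then for any continuous `v : B → ℝ`, the function
`t ↦ (ψ + t v)^c(m)` is differentiable at `t = 0` with derivative `−v(n)`. -/
theorem cTransform_differentiable_at_zero {V : Type*} [NormedAddCommGroup V]
    [InnerProductSpace ℝ V] [FiniteDimensional ℝ V]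
    (A B : Set V) (hAcpt : IsCompact A) (hAne : A.Nonempty)
    (hBcpt : IsCompact B) (hBne : B.Nonempty)
    (ψ : V → ℝ) (hψcont : ContinuousOn ψ B)
    (ψc : V → ℝ) (hψc : ψc = fun x => ⨆ n : B, ((inner ℝ x (n : V) : ℝ) - ψ n))
    (ψcc : V → ℝ) (hψcc : ψcc = fun y => ⨆ x : A, ((inner ℝ (x : V) y : ℝ) - ψc x))
    (hccvx : ∀ n ∈ B, ψcc n = ψ n)
    (m : V) (hm : m ∈ A) (n : V)
    (hsing : {n' | n' ∈ B ∧ ψ n' + ψc m = (inner ℝ m n' : ℝ)} = {n})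
    (v : V → ℝ) (hv : ContinuousOn v B) :
    HasDerivAt (fun t : ℝ => ⨆ n' : B, ((inner ℝ m (n' : V) : ℝ) - ψ n' - t * v n'))
      (-(v n)) 0 := by
  haveI : Nonempty B := hBne.to_subtype
  set g : ℝ → V → ℝ := fun t x => (inner ℝ m x : ℝ) - ψ x - t * v x with hg_def
  set f : ℝ → ℝ := fun t => ⨆ n' : B, g t n' with hf_def
  -- n is in B and is the maximizer at t = 0
  have hn : n ∈ B ∧ ψ n + ψc m = (inner ℝ m n : ℝ) := by
    have : n ∈ ({n} : Set V) := rfl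
    rw [← hsing] at this; exact this
  have hnB : n ∈ B := hn.1
  -- continuity of g t on B
  have hg : ∀ t : ℝ, ContinuousOn (g t) B := by
    intro t
    exact (((continuous_const.inner continuous_id).continuousOn.sub hψcont).sub
      (continuousOn_const.mul hv))
  have himage : ∀ t : ℝ, f t = sSup (g t '' B) := by
    intro t
    rw [hf_def, sSup_image']
  have hbdd : ∀ t : ℝ, BddAbove (g t '' B) := fun t =>
    ((hBcpt.image_of_continuousOn (hg t)).bddAbove)
  have hle : ∀ t : ℝ, ∀ x ∈ B, g t x ≤ f t := by
    intro t x hx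
    rw [himage t]
    exact le_csSup (hbdd t) (Set.mem_image_of_mem _ hx)
  have hfeq : ∀ t : ℝ, ∀ x ∈ B, (∀ y ∈ B, g t y ≤ g t x) → f t = g t x := by
    intro t x hx hmax
    rw [himage t]
    exact IsGreatest.csSup_eq ⟨Set.mem_image_of_mem _ hx, by
      rintro _ ⟨y, hy, rfl⟩; exact hmax y hy⟩
  -- value at t = 0
  have hψcm : ψc m = f 0 := by
    rw [hψc, hf_def]
    simp only []
    exact iSup_congr fun x => by simp [hg_def]
  have hn0 : g 0 n = f 0 := by
    have : g 0 n = ψc m := by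
      simp only [hg_def, zero_mul, sub_zero]
      linarith [hn.2]
    rw [this, hψcm]
  have hnmax : ∀ x ∈ B, g 0 x ≤ g 0 n := by
    intro x hx; rw [hn0]; exact hle 0 x hx
  -- strict maximality off n
  have huniq : ∀ x ∈ B, x ≠ n → g 0 x < g 0 n := by
    intro x hx hxn
    refine lt_of_le_of_ne (hnmax x hx) (fun heq => hxn ?_)
    have hx' : x ∈ {n' | n' ∈ B ∧ ψ n' + ψc m = (inner ℝ m n' : ℝ)} := by
      refine ⟨hx, ?_⟩
      have h1 : g 0 x = ψc m := by rw [heq, hn0, hψcm]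
      simp only [hg_def, zero_mul, sub_zero] at h1
      linarith
    rw [hsing] at hx'
    exact hx'
  -- bound on v over B
  obtain ⟨C, hC⟩ := hBcpt.exists_bound_of_continuousOn hv
  have hC0 : 0 ≤ C := by
    obtain ⟨x, hx⟩ := hBne
    exact (norm_nonneg _).trans (hC x hx)
  -- key claim: maximizers for small t have v-value close to v n
  have hclaim : ∀ ε > (0:ℝ), ∃ δ > (0:ℝ), ∀ t : ℝ, |t| < δ →
      ∀ x ∈ B, (∀ y ∈ B, g t y ≤ g t x) → |v x - v n| < ε := by
    intro ε hε
    set K : Set V := B ∩ v ⁻¹' {r | ε ≤ |r - v n|} with hK_def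
    have hKclosed : IsClosed K :=
      hv.preimage_isClosed_of_isClosed hBcpt.isClosed
        (isClosed_le continuous_const ((continuous_id.sub continuous_const).abs))
    have hKcpt : IsCompact K := hBcpt.of_isClosed_subset hKclosed Set.inter_subset_left
    rcases K.eq_empty_or_nonempty with hKe | hKne
    · refine ⟨1, one_pos, fun t _ x hx _ => ?_⟩
      by_contra hcon
      push_neg at hcon
      have : x ∈ K := ⟨hx, hcon⟩
      rw [hKe] at this; exact this
    · obtain ⟨y, hyK, hymax⟩ := hKcpt.exists_isMaxOn hKne ((hg 0).mono Set.inter_subset_left)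
      have hyB : y ∈ B := hyK.1
      have hyn : y ≠ n := by
        intro h
        have := hyK.2
        simp only [Set.mem_preimage, Set.mem_setOf_eq, h, sub_self, abs_zero] at this
        linarith
      have hylt : g 0 y < g 0 n := huniq y hyB hyn
      set δ' : ℝ := g 0 n - g 0 y with hδ'
      have hδ'pos : 0 < δ' := by simp [hδ']; linarith
      refine ⟨δ' / (2 * (C + 1)), by positivity, fun t ht x hx hmax => ?_⟩
      by_contra hcon
      push_neg at hcon
      have hxK : x ∈ K := ⟨hx, hcon⟩
      have h2 : g 0 x ≤ g 0 y := hymax hxK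
      have h1 : g t n ≤ g t x := hmax n hnB
      have h6 : t * v n ≤ |t| * C := (le_abs_self _).trans (by
        rw [abs_mul]
        exact mul_le_mul_of_nonneg_left (hC n hnB) (abs_nonneg t))
      have h7 : -(|t| * C) ≤ t * v x := by
        have : |t * v x| ≤ |t| * C := by
          rw [abs_mul]
          exact mul_le_mul_of_nonneg_left (hC x hx) (abs_nonneg t)
        linarith [neg_abs_le (t * v x)]
      have hgtn : g t n = g 0 n - t * v n := by simp only [hg_def]; ring
      have hgtx : g t x = g 0 x - t * v x := by simp only [hg_def]; ring
      rw [hgtn, hgtx] at h1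
      have habs : 0 ≤ |t| := abs_nonneg t
      have h8 : |t| * (2 * (C + 1)) < δ' := (lt_div_iff₀ (by positivity)).mp ht
      nlinarith [h1, h2, h6, h7, h8, habs, hδ'pos]
  -- now the derivative
  rw [hasDerivAt_iff_tendsto_slope]
  rw [Metric.tendsto_nhdsWithin_nhds]
  intro ε hε
  obtain ⟨δ, hδpos, hδ⟩ := hclaim ε hε
  refine ⟨δ, hδpos, fun t ht htδ => ?_⟩
  have htne : t ≠ 0 := ht
  rw [Real.dist_eq, sub_zero] at htδ
  obtain ⟨x, hx, hxmax⟩ := hBcpt.exists_isMaxOn hBne (hg t)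
  have hxmax' : ∀ y ∈ B, g t y ≤ g t x := fun y hy => hxmax hy
  have hvx : |v x - v n| < ε := hδ t htδ x hx hxmax'
  have hft : f t = g t x := hfeq t x hx hxmax'
  -- lower bound
  have hlow : g 0 n - t * v n ≤ f t := by
    have := hle t n hnB
    have hgtn : g t n = g 0 n - t * v n := by simp only [hg_def]; ring
    linarith [hgtn ▸ this]
  -- upper bound
  have hup : f t ≤ g 0 n - t * v x := by
    have h1 : g 0 x ≤ g 0 n := hnmax x hx
    have hgtx : g t x = g 0 x - t * v x := by simp only [hg_def]; ring
    rw [hft, hgtx]; linarith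
  have hf0 : f 0 = g 0 n := hn0.symm
  -- q = f t - f 0 + t * v n  satisfies 0 ≤ q ≤ t * (v n - v x)
  set q : ℝ := f t - f 0 + t * v n with hq
  have hq0 : 0 ≤ q := by rw [hq, hf0]; linarith
  have hq1 : q ≤ t * v n - t * v x := by rw [hq, hf0]; linarith
  have hqabs : |q| ≤ |t| * |v n - v x| := by
    rw [abs_of_nonneg hq0]
    calc q ≤ t * (v n - v x) := by linarith
    _ ≤ |t * (v n - v x)| := le_abs_self _
    _ = |t| * |v n - v x| := abs_mul _ _
  rw [Real.dist_eq]
  have hslope : slope f 0 t = (f t - f 0) / t := by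
    rw [slope_def_field]; rw [sub_zero]
  have hkey : slope (fun t : ℝ => ⨆ n' : B, ((inner ℝ m (n' : V) : ℝ) - ψ n' - t * v n')) 0 t
      = slope f 0 t := rfl
  rw [hkey, hslope]
  have : (f t - f 0) / t - -(v n) = q / t := by
    rw [hq]; field_simp; ring
  rw [this, abs_div]
  calc |q| / |t| ≤ (|t| * |v n - v x|) / |t| := by gcongr
  _ = |v n - v x| := by field_simp
  _ = |v x - v n| := abs_sub_comm _ _
  _ < ε := hvx
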